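/- Under the relations {v⁺(λ),v⁺(μ)} = (2/sinh(λ−μ))(e^{λ−μ}X⁺(μ) − e^{−(λ−μ)}X⁺(λ)), [X⁺(λ),v⁺(μ)]=0, [X⁺(λ),X⁺(μ)]=0, the operators B_M defined by the recursion B_M(μ₁,…,μ_M) = v⁺(μ₁)B_{M−1}(μ₂,…,μ_M) + 2X⁺(μ₁)Σ_{j=2}^M (−1)^j (e^{−(μ₁−μ_j)}/sinh(μ₁−μ_j)) B_{M−2}^{(j)} satisfy v⁺(λ) B_M = (−1)^M B_M v⁺(λ) + 2 Σ_{j=1}^M ((−1)^j / sinh(λ−μ_j)) ( e^{−(λ−μ_j)} X⁺(λ) − e^{λ−μ_j} X⁺(μ_j) ) B_{M−1}^{(j)}. -/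

import Mathlib

/-- The creation operators `B_M` of the trigonometric osp(1|2) Gaudin model,
defined by the recursion
`B_M(μ₁,…,μ_M) = v⁺(μ₁)B_{M−1}(μ₂,…,μ_M)
  + 2X⁺(μ₁) Σ_{j=2}^{M} (−1)^j (e^{−(μ₁−μ_j)}/sinh(μ₁−μ_j)) B_{M−2}^{(j)}`,
with `B₀ = 1`, encoded on lists of spectral parameters. -/
noncomputable def gaudinB {A : Type*} [Ring A] [Algebra ℂ A]
    (vp Xp : ℂ → A) : List ℂ → A
  | [] => 1
  | μ :: rest =>
      vp μ * gaudinB vp Xp rest +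
        2 * Xp μ * ∑ k : Fin rest.length,
          ((-1 : ℂ) ^ (k : ℕ) *
              (Complex.exp (-(μ - rest.get k)) / Complex.sinh (μ - rest.get k))) •
            gaudinB vp Xp (rest.eraseIdx (k : ℕ))
termination_by l => l.length
decreasing_by
  · simp
  · simp [List.length_eraseIdx]
    try omega

namespace GaudinAux

/-- scalar coefficient on the λ side -/
noncomputable def gc (lam x : ℂ) (j : ℕ) : ℂ := (-1 : ℂ) ^ (j + 1) / Complex.sinh (lam - x)

/-- scalar coefficient on the μ side -/
noncomputable def gd (μ x : ℂ) (k : ℕ) : ℂ :=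
  (-1 : ℂ) ^ k * (Complex.exp (-(μ - x)) / Complex.sinh (μ - x))

/-- operator part -/
noncomputable def gT {A : Type*} [Ring A] [Algebra ℂ A] (Xp : ℂ → A) (lam x : ℂ) : A :=
  Complex.exp (-(lam - x)) • Xp lam - Complex.exp (lam - x) • Xp x

lemma two_mul_eq_smul {A : Type*} [Ring A] [Algebra ℂ A] (x : A) : 2 * x = (2 : ℂ) • x := by
  rw [two_mul, two_smul]

lemma mul_sum_smul {A : Type*} [Ring A] [Algebra ℂ A] {ι : Type*} (a : A) (s : Finset ι)
    (c : ι → ℂ) (f : ι → A) :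
    a * ∑ i ∈ s, c i • f i = ∑ i ∈ s, c i • (a * f i) := by
  rw [Finset.mul_sum]
  exact Finset.sum_congr rfl fun i _ => (mul_smul_comm _ _ _)

lemma sum_smul_mul {A : Type*} [Ring A] [Algebra ℂ A] {ι : Type*} (a : A) (s : Finset ι)
    (c : ι → ℂ) (f : ι → A) :
    (∑ i ∈ s, c i • f i) * a = ∑ i ∈ s, c i • (f i * a) := by
  rw [Finset.sum_mul]
  exact Finset.sum_congr rfl fun i _ => (smul_mul_assoc _ _ _)

lemma gaudinB_cons {A : Type*} [Ring A] [Algebra ℂ A] (vp Xp : ℂ → A) (μ : ℂ) (rest : List ℂ) :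
    gaudinB vp Xp (μ :: rest) = vp μ * gaudinB vp Xp rest +
      (2 : ℂ) • ∑ k ∈ Finset.range rest.length,
        gd μ (rest.getD k 0) k • (Xp μ * gaudinB vp Xp (rest.eraseIdx k)) := by
  rw [gaudinB]
  congr 1
  rw [mul_assoc, two_mul_eq_smul, mul_sum_smul, ← Fin.sum_univ_eq_sum_range]
  congr 1
  apply Finset.sum_congr rfl
  intro k _
  congr 2 <;> simp [gd, List.getD_eq_getElem, List.get_eq_getElem]

lemma eraseIdx_eraseIdx {α : Type*} (l : List α) (p q : ℕ) (h : p ≤ q) :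
    (l.eraseIdx (q+1)).eraseIdx p = (l.eraseIdx p).eraseIdx q := by
  induction l generalizing p q with
  | nil => simp
  | cons a t ih =>
    match p, q with
    | 0, q => simp
    | p+1, q+1 => simp [ih p q (by omega)]

lemma cross_sum {M : Type*} [AddCommMonoid M] (m : ℕ) (f g : ℕ → ℕ → M)
    (hfg : ∀ k i, k < m → i < m - 1 →
      f k i = if i < k then g i (k-1) else g (i+1) k) :
    ∑ k ∈ Finset.range m, ∑ i ∈ Finset.range (m-1), f k i
      = ∑ k ∈ Finset.range m, ∑ i ∈ Finset.range (m-1), g k i := by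
  rw [← Finset.sum_product', ← Finset.sum_product']
  apply Finset.sum_nbij'
    (i := fun p => if p.2 < p.1 then (p.2, p.1 - 1) else (p.2 + 1, p.1))
    (j := fun p => if p.2 < p.1 then (p.2, p.1 - 1) else (p.2 + 1, p.1))
  · intro p hp
    simp only [Finset.mem_product, Finset.mem_range] at hp ⊢
    split <;> omega
  · intro p hp
    simp only [Finset.mem_product, Finset.mem_range] at hp ⊢
    split <;> omega
  · intro p hp
    simp only [Finset.mem_product, Finset.mem_range] at hp
    rcases p with ⟨k, i⟩
    by_cases h : i < k
    · simp only [h, if_true, show ¬(k - 1 < i) by omega, if_false]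
      exact Prod.ext (by omega) rfl
    · simp only [h, if_false, show k < i + 1 by omega, if_true]
      exact Prod.ext rfl (by omega)
  · intro p hp
    simp only [Finset.mem_product, Finset.mem_range] at hp
    rcases p with ⟨k, i⟩
    by_cases h : i < k
    · simp only [h, if_true, show ¬(k - 1 < i) by omega, if_false]
      exact Prod.ext (by omega) rfl
    · simp only [h, if_false, show k < i + 1 by omega, if_true]
      exact Prod.ext rfl (by omega)
  · intro p hp
    simp only [Finset.mem_product, Finset.mem_range] at hp
    rcases p with ⟨k, i⟩
    have := hfg k i hp.1 hp.2
    by_cases h : i < k <;> simp [h] at this ⊢ <;> exact this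


lemma gc_succ (lam x : ℂ) (j : ℕ) : gc lam x (j + 1) = -gc lam x j := by
  simp only [gc, pow_succ]
  ring

lemma getD_eraseIdx_of_lt (l : List ℂ) (i j : ℕ) (hj : j < i) (hi : i < l.length) :
    (l.eraseIdx i).getD j 0 = l.getD j 0 := by
  have h1 : j < (l.eraseIdx i).length := by
    rw [List.length_eraseIdx]; simp [hi]; omega
  rw [List.getD_eq_getElem _ _ h1, List.getD_eq_getElem _ _ (by omega)]
  exact List.getElem_eraseIdx_of_lt _ hj

lemma getD_eraseIdx_of_ge (l : List ℂ) (i j : ℕ) (hij : i ≤ j) (hj : j + 1 < l.length) :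
    (l.eraseIdx i).getD j 0 = l.getD (j + 1) 0 := by
  have h1 : j < (l.eraseIdx i).length := by
    rw [List.length_eraseIdx]; split <;> omega
  rw [List.getD_eq_getElem _ _ h1, List.getD_eq_getElem _ _ hj]
  exact List.getElem_eraseIdx_of_ge _ hij

section Comm
variable {A : Type*} [Ring A] [Algebra ℂ A] (vp Xp : ℂ → A)

lemma gT_vp_comm (hXv : ∀ x y : ℂ, Xp x * vp y = vp y * Xp x) (lam x z : ℂ) (b : A) :
    gT Xp lam x * (vp z * b) = vp z * (gT Xp lam x * b) := by
  simp only [gT, sub_mul, smul_mul_assoc, mul_sub, mul_smul_comm, ← mul_assoc]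
  rw [hXv lam z, hXv x z]

lemma gT_Xp_comm (hXX : ∀ x y : ℂ, Xp x * Xp y = Xp y * Xp x) (lam x z : ℂ) (b : A) :
    gT Xp lam x * (Xp z * b) = Xp z * (gT Xp lam x * b) := by
  simp only [gT, sub_mul, smul_mul_assoc, mul_sub, mul_smul_comm, ← mul_assoc]
  rw [hXX lam z, hXX x z]

lemma hvv_lm
    (hvv : ∀ x y : ℂ, Complex.sinh (x - y) ≠ 0 →
      vp x * vp y + vp y * vp x =
        (2 / Complex.sinh (x - y)) •
          (Complex.exp (x - y) • Xp y - Complex.exp (-(x - y)) • Xp x))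
    (lam μ : ℂ) (hs : Complex.sinh (lam - μ) ≠ 0) :
    vp lam * vp μ = (2 : ℂ) • (gc lam μ 0 • gT Xp lam μ) - vp μ * vp lam := by
  rw [eq_sub_of_add_eq (hvv lam μ hs)]
  congr 1
  rw [gc, gT, smul_smul]
  match_scalars <;> ring

end Comm

section Main
variable {A : Type*} [Ring A] [Algebra ℂ A] (vp Xp : ℂ → A)

theorem gaudin_aux
    (hvv : ∀ x y : ℂ, Complex.sinh (x - y) ≠ 0 →
      vp x * vp y + vp y * vp x =
        (2 / Complex.sinh (x - y)) •
          (Complex.exp (x - y) • Xp y - Complex.exp (-(x - y)) • Xp x))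
    (hXv : ∀ x y : ℂ, Xp x * vp y = vp y * Xp x)
    (hXX : ∀ x y : ℂ, Xp x * Xp y = Xp y * Xp x) :
    ∀ (n : ℕ) (l : List ℂ), l.length = n → ∀ lam : ℂ,
      (∀ μ ∈ l, Complex.sinh (lam - μ) ≠ 0) →
      vp lam * gaudinB vp Xp l
        = ((-1 : ℂ) ^ l.length) • (gaudinB vp Xp l * vp lam)
          + (2 : ℂ) • ∑ j ∈ Finset.range l.length,
              gc lam (l.getD j 0) j •
                (gT Xp lam (l.getD j 0) * gaudinB vp Xp (l.eraseIdx j)) := by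
  intro n
  induction n using Nat.strong_induction_on with
  | _ n IH =>
    intro l hl lam hlam
    match l, hl with
    | [], _ => simp [gaudinB]
    | μ :: rest, hl =>
      have hn : rest.length + 1 = n := by simpa using hl
      have hs0 : Complex.sinh (lam - μ) ≠ 0 := hlam μ List.mem_cons_self
      have hlam' : ∀ x ∈ rest, Complex.sinh (lam - x) ≠ 0 :=
        fun x hx => hlam x (List.mem_cons_of_mem _ hx)
      have hBrest := IH rest.length (by omega) rest rfl lam hlam'
      rcases Nat.eq_zero_or_pos rest.length with hm0 | hmpos
      · -- singleton case
        have hrest : rest = [] := List.length_eq_zero_iff.mp hm0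
        subst hrest
        have hB0 : gaudinB vp Xp ([] : List ℂ) = 1 := by rw [gaudinB]
        rw [gaudinB_cons]
        simp only [hB0, mul_one, List.length_cons, List.length_nil, Finset.range_zero,
          Finset.sum_empty, smul_zero, add_zero, Nat.zero_add, Finset.sum_range_one,
          List.getD_cons_zero, List.eraseIdx_cons_zero]
        rw [hvv_lm vp Xp hvv lam μ hs0]
        module
      · obtain ⟨m', hm⟩ : ∃ m', rest.length = m' + 1 := ⟨rest.length - 1, by omega⟩
        have hlen : ∀ k, k < rest.length → (rest.eraseIdx k).length = m' := by
          intro k hk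
          rw [List.length_eraseIdx]
          simp only [hk, if_true]
          omega
        have hBer : ∀ k, k < rest.length →
            vp lam * gaudinB vp Xp (rest.eraseIdx k)
              = ((-1:ℂ) ^ m') • (gaudinB vp Xp (rest.eraseIdx k) * vp lam)
                + (2:ℂ) • ∑ i ∈ Finset.range m',
                    gc lam ((rest.eraseIdx k).getD i 0) i •
                      (gT Xp lam ((rest.eraseIdx k).getD i 0) *
                        gaudinB vp Xp ((rest.eraseIdx k).eraseIdx i)) := by
          intro k hk
          have h := IH (rest.eraseIdx k).length (by rw [hlen k hk]; omega) (rest.eraseIdx k) rfl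
            lam (fun x hx => hlam' x (List.eraseIdx_subset hx))
          rw [hlen k hk] at h
          exact h
        have hL : vp lam * gaudinB vp Xp (μ :: rest)
            = (2:ℂ) • (gc lam μ 0 • (gT Xp lam μ * gaudinB vp Xp rest)) + (-(-1:ℂ) ^ rest.length) • (vp μ * (gaudinB vp Xp rest * vp lam))
              + (2:ℂ) • (∑ j ∈ Finset.range rest.length, gc lam (rest.getD j 0) (j+1) • (vp μ * (gT Xp lam (rest.getD j 0) * gaudinB vp Xp (rest.eraseIdx j))))
              + ((2:ℂ) * (-1:ℂ) ^ m') • (∑ k ∈ Finset.range rest.length, gd μ (rest.getD k 0) k • (Xp μ * (gaudinB vp Xp (rest.eraseIdx k) * vp lam)))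
              + (4:ℂ) • (∑ k ∈ Finset.range rest.length, ∑ i ∈ Finset.range m', (gd μ (rest.getD k 0) k * gc lam ((rest.eraseIdx k).getD i 0) i) • (Xp μ * (gT Xp lam ((rest.eraseIdx k).getD i 0) * gaudinB vp Xp ((rest.eraseIdx k).eraseIdx i)))) := by
          have p1 : vp lam * (vp μ * gaudinB vp Xp rest)
              = (2:ℂ) • (gc lam μ 0 • (gT Xp lam μ * gaudinB vp Xp rest)) + (-(-1:ℂ) ^ rest.length) • (vp μ * (gaudinB vp Xp rest * vp lam)) + (2:ℂ) • (∑ j ∈ Finset.range rest.length, gc lam (rest.getD j 0) (j+1) • (vp μ * (gT Xp lam (rest.getD j 0) * gaudinB vp Xp (rest.eraseIdx j)))) := by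
            rw [← mul_assoc, hvv_lm vp Xp hvv lam μ hs0, sub_mul, mul_assoc, hBrest]
            simp only [smul_mul_assoc, mul_add, mul_smul_comm, Finset.mul_sum]
            have flip : (∑ j ∈ Finset.range rest.length,
                gc lam (rest.getD j 0) j •
                  (vp μ * (gT Xp lam (rest.getD j 0) * gaudinB vp Xp (rest.eraseIdx j))))
                = -(∑ j ∈ Finset.range rest.length, gc lam (rest.getD j 0) (j+1) • (vp μ * (gT Xp lam (rest.getD j 0) * gaudinB vp Xp (rest.eraseIdx j)))) := by
              rw [← Finset.sum_neg_distrib]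
              apply Finset.sum_congr rfl
              intro j _
              rw [gc_succ, neg_smul, neg_neg]
            rw [flip]
            module
          have step : ∀ k ∈ Finset.range rest.length,
              gd μ (rest.getD k 0) k • (vp lam * (Xp μ * gaudinB vp Xp (rest.eraseIdx k)))
              = ((-1:ℂ) ^ m') •
                  (gd μ (rest.getD k 0) k • (Xp μ * (gaudinB vp Xp (rest.eraseIdx k) * vp lam)))
                + (2:ℂ) • ∑ i ∈ Finset.range m',
                    (gd μ (rest.getD k 0) k * gc lam ((rest.eraseIdx k).getD i 0) i) •
                      (Xp μ * (gT Xp lam ((rest.eraseIdx k).getD i 0) *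
                        gaudinB vp Xp ((rest.eraseIdx k).eraseIdx i))) := by
            intro k hk
            rw [← mul_assoc, ← hXv μ lam, mul_assoc, hBer k (Finset.mem_range.mp hk)]
            simp only [mul_add, mul_smul_comm, Finset.mul_sum, smul_add, Finset.smul_sum,
              smul_smul]
            congr 1
            · module
            · apply Finset.sum_congr rfl
              intro i _
              module
          have p2 : vp lam * ((2:ℂ) • ∑ k ∈ Finset.range rest.length,
                gd μ (rest.getD k 0) k • (Xp μ * gaudinB vp Xp (rest.eraseIdx k)))
              = ((2:ℂ) * (-1:ℂ) ^ m') • (∑ k ∈ Finset.range rest.length, gd μ (rest.getD k 0) k • (Xp μ * (gaudinB vp Xp (rest.eraseIdx k) * vp lam))) + (4:ℂ) • (∑ k ∈ Finset.range rest.length, ∑ i ∈ Finset.range m', (gd μ (rest.getD k 0) k * gc lam ((rest.eraseIdx k).getD i 0) i) • (Xp μ * (gT Xp lam ((rest.eraseIdx k).getD i 0) * gaudinB vp Xp ((rest.eraseIdx k).eraseIdx i)))) := by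
            rw [mul_smul_comm, Finset.mul_sum]
            simp only [mul_smul_comm]
            rw [Finset.sum_congr rfl step, Finset.sum_add_distrib, ← Finset.smul_sum,
              ← Finset.smul_sum]
            module
          rw [gaudinB_cons, mul_add, p1, p2]
          module
        have hcross : (∑ k ∈ Finset.range rest.length, ∑ i ∈ Finset.range m', (gd μ (rest.getD k 0) k * gc lam ((rest.eraseIdx k).getD i 0) i) • (Xp μ * (gT Xp lam ((rest.eraseIdx k).getD i 0) * gaudinB vp Xp ((rest.eraseIdx k).eraseIdx i)))) = (∑ j ∈ Finset.range rest.length, ∑ i ∈ Finset.range m', (gc lam (rest.getD j 0) (j+1) * gd μ ((rest.eraseIdx j).getD i 0) i) • (Xp μ * (gT Xp lam (rest.getD j 0) * gaudinB vp Xp ((rest.eraseIdx j).eraseIdx i)))) := by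
          have h := cross_sum rest.length
            (fun k i => (gd μ (rest.getD k 0) k * gc lam ((rest.eraseIdx k).getD i 0) i) •
              (Xp μ * (gT Xp lam ((rest.eraseIdx k).getD i 0) *
                gaudinB vp Xp ((rest.eraseIdx k).eraseIdx i))))
            (fun j i => (gc lam (rest.getD j 0) (j+1) * gd μ ((rest.eraseIdx j).getD i 0) i) •
              (Xp μ * (gT Xp lam (rest.getD j 0) * gaudinB vp Xp ((rest.eraseIdx j).eraseIdx i))))
            ?_
          · rw [show rest.length - 1 = m' from by omega] at h
            exact h
          · intro k i hk hi
            by_cases hik : i < k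
            · rw [if_pos hik]
              obtain ⟨k'', rfl⟩ : ∃ k'', k = k'' + 1 := ⟨k - 1, by omega⟩
              simp only [Nat.add_sub_cancel]
              rw [getD_eraseIdx_of_lt rest (k''+1) i hik (by omega),
                getD_eraseIdx_of_ge rest i k'' (by omega) (by omega),
                eraseIdx_eraseIdx rest i k'' (by omega)]
              congr 1
              simp only [gc, gd, pow_succ]
              ring
            · rw [if_neg hik]
              rw [getD_eraseIdx_of_ge rest k i (by omega) (by omega),
                getD_eraseIdx_of_lt rest (i+1) k (by omega) (by omega),
                ← eraseIdx_eraseIdx rest k i (by omega)]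
              congr 1
              simp only [gc, gd, pow_succ]
              ring
        have q1 : (vp μ * gaudinB vp Xp rest + (2:ℂ) • ∑ k ∈ Finset.range rest.length,
              gd μ (rest.getD k 0) k • (Xp μ * gaudinB vp Xp (rest.eraseIdx k))) * vp lam
            = (vp μ * (gaudinB vp Xp rest * vp lam)) + (2:ℂ) • (∑ k ∈ Finset.range rest.length, gd μ (rest.getD k 0) k • (Xp μ * (gaudinB vp Xp (rest.eraseIdx k) * vp lam))) := by
          rw [add_mul, mul_assoc, smul_mul_assoc, Finset.sum_mul]
          simp only [smul_mul_assoc, mul_assoc]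
        have q2 : ∀ j ∈ Finset.range rest.length,
            gc lam (rest.getD j 0) (j+1) •
              (gT Xp lam (rest.getD j 0) * gaudinB vp Xp (μ :: rest.eraseIdx j))
            = gc lam (rest.getD j 0) (j+1) •
                (vp μ * (gT Xp lam (rest.getD j 0) * gaudinB vp Xp (rest.eraseIdx j)))
              + (2:ℂ) • ∑ i ∈ Finset.range m',
                  (gc lam (rest.getD j 0) (j+1) * gd μ ((rest.eraseIdx j).getD i 0) i) •
                    (Xp μ * (gT Xp lam (rest.getD j 0) *
                      gaudinB vp Xp ((rest.eraseIdx j).eraseIdx i))) := by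
          intro j hj
          rw [gaudinB_cons, hlen j (Finset.mem_range.mp hj)]
          rw [mul_add, gT_vp_comm vp Xp hXv]
          simp only [mul_smul_comm, Finset.mul_sum, gT_Xp_comm Xp hXX, smul_add,
            Finset.smul_sum, smul_smul]
          congr 1
          apply Finset.sum_congr rfl
          intro i _
          module
        have hR : ((-1:ℂ) ^ (μ :: rest).length) • (gaudinB vp Xp (μ :: rest) * vp lam)
              + (2:ℂ) • ∑ j ∈ Finset.range (μ :: rest).length,
                  gc lam ((μ :: rest).getD j 0) j •
                    (gT Xp lam ((μ :: rest).getD j 0) *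
                      gaudinB vp Xp ((μ :: rest).eraseIdx j))
            = (2:ℂ) • (gc lam μ 0 • (gT Xp lam μ * gaudinB vp Xp rest)) + ((-1:ℂ) ^ (rest.length + 1)) • (vp μ * (gaudinB vp Xp rest * vp lam))
              + (2:ℂ) • (∑ j ∈ Finset.range rest.length, gc lam (rest.getD j 0) (j+1) • (vp μ * (gT Xp lam (rest.getD j 0) * gaudinB vp Xp (rest.eraseIdx j))))
              + ((-1:ℂ) ^ (rest.length + 1) * 2) • (∑ k ∈ Finset.range rest.length, gd μ (rest.getD k 0) k • (Xp μ * (gaudinB vp Xp (rest.eraseIdx k) * vp lam)))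
              + (4:ℂ) • (∑ j ∈ Finset.range rest.length, ∑ i ∈ Finset.range m', (gc lam (rest.getD j 0) (j+1) * gd μ ((rest.eraseIdx j).getD i 0) i) • (Xp μ * (gT Xp lam (rest.getD j 0) * gaudinB vp Xp ((rest.eraseIdx j).eraseIdx i)))) := by
          rw [gaudinB_cons]
          simp only [List.length_cons]
          rw [Finset.sum_range_succ']
          simp only [List.getD_cons_zero, List.getD_cons_succ, List.eraseIdx_cons_zero,
            List.eraseIdx_cons_succ]
          rw [q1, Finset.sum_congr rfl q2, Finset.sum_add_distrib, ← Finset.smul_sum]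
          module
        rw [hL, hcross, hR, hm]
        module

end Main
end GaudinAux

/-- Commutation of `v⁺(λ)` through the creation operator `B_M`:
`v⁺(λ) B_M = (−1)^M B_M v⁺(λ)
  + 2 Σ_{j=1}^M ((−1)^j / sinh(λ−μ_j)) (e^{−(λ−μ_j)} X⁺(λ) − e^{λ−μ_j} X⁺(μ_j)) B_{M−1}^{(j)}`. -/
theorem osp12_vp_B_commutation
    {A : Type*} [Ring A] [Algebra ℂ A]
    (vp Xp : ℂ → A)
    (hvv : ∀ x y : ℂ, Complex.sinh (x - y) ≠ 0 →
      vp x * vp y + vp y * vp x =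
        (2 / Complex.sinh (x - y)) •
          (Complex.exp (x - y) • Xp y - Complex.exp (-(x - y)) • Xp x))
    (hXv : ∀ x y : ℂ, Xp x * vp y = vp y * Xp x)
    (hXX : ∀ x y : ℂ, Xp x * Xp y = Xp y * Xp x)
    (l : List ℂ)
    (hdist : l.Pairwise (fun x y => x ≠ y ∧ Complex.sinh (x - y) ≠ 0))
    (lam : ℂ)
    (hlam : ∀ μ ∈ l, lam ≠ μ ∧ Complex.sinh (lam - μ) ≠ 0) :
    vp lam * gaudinB vp Xp l
      = ((-1 : ℂ) ^ l.length) • (gaudinB vp Xp l * vp lam)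
        + 2 * ∑ j : Fin l.length,
            (((-1 : ℂ) ^ ((j : ℕ) + 1)) / Complex.sinh (lam - l.get j)) •
              ((Complex.exp (-(lam - l.get j)) • Xp lam
                  - Complex.exp (lam - l.get j) • Xp (l.get j)) *
                gaudinB vp Xp (l.eraseIdx (j : ℕ))) := by
  have h := GaudinAux.gaudin_aux vp Xp hvv hXv hXX l.length l rfl lam (fun μ hμ => (hlam μ hμ).2)
  rw [h, GaudinAux.two_mul_eq_smul]
  congr 2
  rw [← Fin.sum_univ_eq_sum_range]
  apply Finset.sum_congr rfl
  intro j _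
  simp only [GaudinAux.gc, GaudinAux.gT, List.get_eq_getElem, List.getD_eq_getElem l 0 j.isLt]
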